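/- Fix 0 < p < 1 and let E : ℕ → ℝ satisfy E(0) = 0 and, for all n ≥ 1, E(n) = 1 + p·E(n−1) + ((1−p)/n)·Σ_{k=1}^{n} E(k−1). Let F : ℕ → ℝ satisfy F(0) = 0 and, for all n ≥ 1, F(n) = 1 + p·F(n−1) + ((1−p)/n)·Σ_{k=1}^{n} (E(n−k) + E(k−1)). Then (1−p)·F(n) − 2·H_n converges to −1 + 2·ln(1−p) as n → ∞. -/

import Mathlib

open Finset Filter

/-- The `n`-th harmonic number `H_n = ∑_{k=1}^n 1/k`, with `H 0 = 0`. -/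
noncomputable def H (n : ℕ) : ℝ := ∑ k ∈ Finset.Icc 1 n, (1 : ℝ) / k

private lemma icc_succ_top (f : ℕ → ℝ) (n : ℕ) :
    ∑ k ∈ Finset.Icc 1 (n + 1), f k = (∑ k ∈ Finset.Icc 1 n, f k) + f (n + 1) := by
  rw [← Finset.insert_Icc_right_eq_Icc_add_one (by omega), Finset.sum_insert (by simp)]
  ring

private lemma icc_eq_range (f : ℕ → ℝ) (n : ℕ) :
    ∑ k ∈ Finset.Icc 1 n, f k = ∑ i ∈ Finset.range n, f (i + 1) := by
  induction n with
  | zero => simp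
  | succ m ih => rw [icc_succ_top, ih, Finset.sum_range_succ]

private lemma icc_reflect (f : ℕ → ℝ) (n : ℕ) :
    ∑ k ∈ Finset.Icc 1 n, f (n - k) = ∑ k ∈ Finset.Icc 1 n, f (k - 1) := by
  rw [icc_eq_range (fun k => f (n - k)), icc_eq_range (fun k => f (k - 1))]
  simp only [Nat.add_sub_cancel]
  rw [← Finset.sum_range_reflect (fun i => f i) n]
  apply Finset.sum_congr rfl
  intro i hi
  simp only [Finset.mem_range] at hi
  congr 1
  omega

theorem stmt_5 (p : ℝ) (hp0 : 0 < p) (hp1 : p < 1)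
    (E F : ℕ → ℝ) (hE0 : E 0 = 0)
    (hErec : ∀ n : ℕ, 1 ≤ n →
      E n = 1 + p * E (n - 1) + ((1 - p) / (n : ℝ)) * ∑ k ∈ Finset.Icc 1 n, E (k - 1))
    (hF0 : F 0 = 0)
    (hFrec : ∀ n : ℕ, 1 ≤ n →
      F n = 1 + p * F (n - 1) +
        ((1 - p) / (n : ℝ)) * ∑ k ∈ Finset.Icc 1 n, (E (n - k) + E (k - 1))) :
    Tendsto (fun n : ℕ => (1 - p) * F n - 2 * H n) atTop
      (nhds (-1 + 2 * Real.log (1 - p))) := by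
  have h1p : (1 : ℝ) - p ≠ 0 := by linarith
  set e : ℕ → ℝ := fun n => ∑ k ∈ Finset.Icc 1 n, (1 - p ^ k) / k with he
  have he0 : e 0 = 0 := by simp [he]
  have hesucc : ∀ n : ℕ, e (n + 1) = e n + (1 - p ^ (n + 1)) / (n + 1) := by
    intro n
    simp only [he]
    rw [icc_succ_top (fun k => (1 - p ^ k) / k)]
    push_cast
    ring
  -- key sum identity
  have hT : ∀ n : ℕ, ∑ k ∈ Finset.Icc 1 (n + 1), e (k - 1) =
      ((n : ℝ) + 1) * e n + (1 - p ^ (n + 1)) / (1 - p) - ((n : ℝ) + 1) := by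
    intro n
    induction n with
    | zero =>
      rw [show Finset.Icc 1 1 = {1} from rfl, Finset.sum_singleton]
      simp only [he0, Nat.cast_zero, zero_add, pow_one, Nat.sub_self, mul_zero]
      rw [div_self h1p]
      ring
    | succ m ih =>
      rw [icc_succ_top (fun k => e (k - 1)), ih]
      simp only [Nat.add_sub_cancel]
      rw [hesucc m]
      have hm1 : ((m : ℝ) + 1) ≠ 0 := by positivity
      push_cast
      field_simp
      ring
  -- closed form for E
  have hEe : ∀ n : ℕ, (1 - p) * E n = e n := by
    intro n
    induction n using Nat.strong_induction_on with
    | _ n ih =>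
      match n with
      | 0 => simp [hE0, he0]
      | Nat.succ m =>
        rw [hErec (m + 1) (by omega)]
        have hsum : ∑ k ∈ Finset.Icc 1 (m + 1), E (k - 1) =
            (∑ k ∈ Finset.Icc 1 (m + 1), e (k - 1)) / (1 - p) := by
          rw [Finset.sum_div]
          apply Finset.sum_congr rfl
          intro k hk
          simp only [Finset.mem_Icc] at hk
          rw [← ih (k - 1) (by omega), mul_comm, mul_div_assoc, div_self h1p, mul_one]
        rw [hsum, hT m, Nat.add_sub_cancel, hesucc m]
        have hm1 : ((m : ℝ) + 1) ≠ 0 := by positivity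
        have hEm : E m = e m / (1 - p) := by
          rw [eq_div_iff h1p]; linarith [ih m (by omega)]
        rw [hEm]
        push_cast
        field_simp
        ring
  -- F n - 2 E n closed form
  have hD : ∀ n : ℕ, F n - 2 * E n = -(1 - p ^ n) / (1 - p) := by
    intro n
    induction n with
    | zero => simp [hF0, hE0]
    | succ m ih =>
      rw [hFrec (m + 1) (by omega), hErec (m + 1) (by omega)]
      simp only [Nat.add_sub_cancel]
      rw [Finset.sum_add_distrib, icc_reflect E (m + 1)]
      have : F m = 2 * E m + -(1 - p ^ m) / (1 - p) := by linarith [ih]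
      rw [this]
      field_simp
      ring
  -- rewrite the sequence
  have hkey : ∀ n : ℕ, (1 - p) * F n - 2 * H n =
      -2 * (∑ i ∈ Finset.range n, p ^ (i + 1) / (i + 1)) - 1 + p ^ n := by
    intro n
    have h1 : (1 - p) * F n = 2 * e n - (1 - p ^ n) := by
      have := hD n
      have h2 := hEe n
      have : F n = 2 * E n + -(1 - p ^ n) / (1 - p) := by linarith [hD n]
      rw [this]
      field_simp
      linarith [hEe n]
    rw [h1]
    have h3 : e n - H n = -∑ i ∈ Finset.range n, p ^ (i + 1) / (i + 1) := by
      simp only [he, H, ← Finset.sum_sub_distrib]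
      rw [icc_eq_range (fun k => (1 - p ^ k) / k - 1 / k), ← Finset.sum_neg_distrib]
      apply Finset.sum_congr rfl
      intro i hi
      have : ((i : ℝ) + 1) ≠ 0 := by positivity
      push_cast
      field_simp
      ring
    have : e n = H n - ∑ i ∈ Finset.range n, p ^ (i + 1) / (i + 1) := by linarith
    rw [this]; ring
  simp only [hkey]
  have habs : |p| < 1 := by rw [abs_of_pos hp0]; exact hp1
  have hlog := (Real.hasSum_pow_div_log_of_abs_lt_one habs).tendsto_sum_nat
  have hpow : Tendsto (fun n : ℕ => p ^ n) atTop (nhds 0) :=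
    tendsto_pow_atTop_nhds_zero_of_lt_one hp0.le hp1
  have hcomb := ((hlog.const_mul (-2 : ℝ)).sub_const 1).add hpow
  have hval : (-1 + 2 * Real.log (1 - p)) = -2 * -Real.log (1 - p) - 1 + 0 := by ring
  rw [hval]
  exact hcomb
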